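/- Let (Φ_k)_{k∈ℤ^d∖{0}} be complex numbers with Φ_{−k} = Φ_k^*, let (ω_k) be real numbers with ω_{−k} = −ω_k, and let (β_k) be nonnegative reals with β_{−k} = β_k. Assume Σ_{k≠0} |k|² |Φ_k| < ∞. For ε > 0 define E^ε(t,x) = Σ_{k≠0} (−i k) Φ_k e^{−i ω_k ε^{−β_k} t} e^{i k·x}. Then for every t > 0, ε > 0 and v ∈ ℝ^d, the matrix-valued integral 𝔻^ε(t,v) = ⨍_{𝕋^d} dx ∫_0^{t/ε²} dσ E^ε(t, x + σ v) ⊗ E^ε(t − ε²σ, x) equals Σ_{k≠0} (k ⊗ k) |Φ_k|² · sin((ε^{2−β_k} ω_k − k·v) t/ε²) / (ε^{2−β_k} ω_k − k·v), where the ratio sin(a T)/a is interpreted as T when a = 0, and the series converges absolutely. -/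

import Mathlib

open MeasureTheory Filter Topology

/-- The fundamental domain `[0,2π)^d` of the torus `𝕋^d = (ℝ/2πℤ)^d`. -/
def torusBox (d : ℕ) : Set (Fin d → ℝ) :=
  Set.pi Set.univ fun _ => Set.Ico (0 : ℝ) (2 * Real.pi)

namespace Stmt7

noncomputable def phase {d : ℕ} (k : Fin d → ℤ) (x : Fin d → ℝ) : ℂ :=
  Complex.exp (Complex.I * ∑ m, (k m : ℂ) * (x m : ℂ))

lemma phase_eq {d : ℕ} (k : Fin d → ℤ) (x : Fin d → ℝ) :
    phase k x = Complex.exp (((∑ m, (k m : ℝ) * x m : ℝ) : ℂ) * Complex.I) := by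
  unfold phase
  congr 1
  push_cast
  ring

lemma norm_phase {d : ℕ} (k : Fin d → ℤ) (x : Fin d → ℝ) : ‖phase k x‖ = 1 := by
  rw [phase_eq, Complex.norm_exp_ofReal_mul_I]

lemma continuous_phase {d : ℕ} (k : Fin d → ℤ) : Continuous fun x => phase (d := d) k x := by
  unfold phase
  fun_prop

noncomputable def tosc (w e s : ℝ) : ℂ :=
  Complex.exp (-(Complex.I * (w : ℂ) * (e : ℂ) * (s : ℂ)))

lemma tosc_eq (w e s : ℝ) : tosc w e s = Complex.exp (((-(w * e * s) : ℝ) : ℂ) * Complex.I) := by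
  unfold tosc; congr 1; push_cast; ring

lemma norm_tosc (w e s : ℝ) : ‖tosc w e s‖ = 1 := by
  rw [tosc_eq, Complex.norm_exp_ofReal_mul_I]

lemma norm_cexp_I_mul (c σ : ℝ) : ‖Complex.exp (Complex.I * (c : ℂ) * (σ : ℂ))‖ = 1 := by
  rw [show Complex.I * (c : ℂ) * (σ : ℂ) = ((c * σ : ℝ) : ℂ) * Complex.I by push_cast; ring,
    Complex.norm_exp_ofReal_mul_I]

lemma continuous_cexp_I_mul (c : ℝ) :
    Continuous fun σ : ℝ => Complex.exp (Complex.I * (c : ℂ) * (σ : ℂ)) := by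
  fun_prop

lemma phase_add {d : ℕ} (k : Fin d → ℤ) (x v : Fin d → ℝ) (σ : ℝ) :
    phase k (x + σ • v) =
      phase k x * Complex.exp (Complex.I * ((∑ m, (k m : ℝ) * v m : ℝ) : ℂ) * (σ : ℂ)) := by
  unfold phase
  rw [← Complex.exp_add]
  congr 1
  have : ∀ m : Fin d, ((k m : ℂ)) * (((x + σ • v) m : ℝ) : ℂ)
      = (k m : ℂ) * (x m : ℂ) + (σ:ℂ) * ((k m : ℂ) * (v m : ℂ)) := by
    intro m
    simp only [Pi.add_apply, Pi.smul_apply, smul_eq_mul]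
    push_cast
    ring
  rw [Finset.sum_congr rfl (fun m _ => this m), Finset.sum_add_distrib, ← Finset.mul_sum]
  push_cast
  ring

lemma tosc_sub (w e t c σ : ℝ) :
    tosc w e (t - c * σ) = tosc w e t * Complex.exp (Complex.I * ((w * e * c : ℝ) : ℂ) * (σ : ℂ)) := by
  unfold tosc
  rw [← Complex.exp_add]
  congr 1
  push_cast
  ring

lemma phase_mul {d : ℕ} (k l : Fin d → ℤ) (x : Fin d → ℝ) :
    phase k x * phase l x = phase (k + l) x := by
  unfold phase
  rw [← Complex.exp_add]
  congr 1
  rw [Finset.mul_sum, Finset.mul_sum, Finset.mul_sum, ← Finset.sum_add_distrib]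
  refine Finset.sum_congr rfl fun m _ => ?_
  simp only [Pi.add_apply]
  push_cast
  ring

lemma interval_exp (c T : ℝ) :
    ∫ σ in (0:ℝ)..T, Complex.exp (Complex.I * (c : ℂ) * (σ : ℂ)) =
      if c = 0 then (T : ℂ) else (Complex.exp (Complex.I * c * T) - 1) / (Complex.I * c) := by
  rcases eq_or_ne c 0 with hc | hc
  · simp [hc]
  · rw [if_neg hc]
    have hc' : Complex.I * (c : ℂ) ≠ 0 :=
      mul_ne_zero Complex.I_ne_zero (by exact_mod_cast hc)
    have := integral_exp_mul_complex (a := 0) (b := T) hc'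
    simp only [mul_assoc] at this ⊢
    rw [this]
    simp

lemma exp_I_int_integral (n : ℤ) :
    ∫ x in Set.Ico (0:ℝ) (2 * Real.pi), Complex.exp (Complex.I * (n : ℂ) * (x : ℂ)) =
      if n = 0 then (((2 * Real.pi : ℝ)) : ℂ) else 0 := by
  have h2π : (0:ℝ) ≤ 2 * Real.pi := by positivity
  have hIoo : ∫ x in Set.Ico (0:ℝ) (2*Real.pi), Complex.exp (Complex.I * (n : ℂ) * (x : ℂ))
      = ∫ x in (0:ℝ)..(2*Real.pi), Complex.exp (Complex.I * (n : ℂ) * (x : ℂ)) := by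
    rw [intervalIntegral.integral_of_le h2π, integral_Ico_eq_integral_Ioo,
      integral_Ioc_eq_integral_Ioo]
  rw [hIoo]
  rcases eq_or_ne n 0 with hn | hn
  · simp [hn]
  · rw [if_neg hn]
    have hc' : Complex.I * (n : ℂ) ≠ 0 :=
      mul_ne_zero Complex.I_ne_zero (by exact_mod_cast hn)
    have := integral_exp_mul_complex (a := 0) (b := 2*Real.pi) hc'
    simp only [mul_assoc] at this ⊢
    rw [this]
    have : Complex.exp (Complex.I * ((n:ℂ) * ((2*Real.pi : ℝ) : ℂ))) = 1 := by
      rw [show Complex.I * ((n:ℂ) * ((2*Real.pi : ℝ) : ℂ)) = (n:ℂ) * (2 * Real.pi * Complex.I) by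
        push_cast; ring]
      exact Complex.exp_int_mul_two_pi_mul_I n
    rw [this]
    simp

lemma measurableSet_torusBox (d : ℕ) : MeasurableSet (torusBox d) :=
  MeasurableSet.univ_pi fun _ => measurableSet_Ico

lemma volume_torusBox (d : ℕ) :
    volume (torusBox d) = ENNReal.ofReal (2 * Real.pi) ^ d := by
  rw [torusBox, volume_pi, MeasureTheory.Measure.pi_pi]
  simp [Real.volume_Ico]

lemma volume_torusBox_lt_top (d : ℕ) : volume (torusBox d) < ⊤ := by
  rw [volume_torusBox]
  exact ENNReal.pow_lt_top ENNReal.ofReal_lt_top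

lemma volume_torusBox_toReal (d : ℕ) : (volume (torusBox d)).toReal = (2 * Real.pi) ^ d := by
  rw [volume_torusBox, ENNReal.toReal_pow, ENNReal.toReal_ofReal (by positivity)]

lemma box_integral_phase (d : ℕ) (n : Fin d → ℤ) :
    ∫ x in torusBox d, phase n x = if n = 0 then ((((2*Real.pi)^d : ℝ)) : ℂ) else 0 := by
  have hprod : ∀ x : Fin d → ℝ, phase n x = ∏ m, Complex.exp (Complex.I * (n m : ℂ) * (x m : ℂ)) := by
    intro x
    rw [phase, ← Complex.exp_sum, Finset.mul_sum]
    congr 1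
    exact Finset.sum_congr rfl fun m _ => by ring
  simp only [hprod]
  rw [← MeasureTheory.integral_indicator (measurableSet_torusBox d)]
  have hind : (torusBox d).indicator
        (fun x => ∏ m, Complex.exp (Complex.I * (n m : ℂ) * ((x m : ℝ) : ℂ)))
      = fun x => ∏ m, (Set.Ico (0:ℝ) (2*Real.pi)).indicator
          (fun y => Complex.exp (Complex.I * (n m : ℂ) * (y : ℂ))) (x m) := by
    funext x
    by_cases hx : x ∈ torusBox d
    · rw [Set.indicator_of_mem hx]
      refine (Finset.prod_congr rfl fun m _ => ?_)
      have hxm : x m ∈ Set.Ico (0:ℝ) (2*Real.pi) := hx m (Set.mem_univ m)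
      exact (Set.indicator_of_mem hxm (fun y => Complex.exp (Complex.I * (n m : ℂ) * (y : ℂ)))).symm
    · rw [Set.indicator_of_notMem hx]
      obtain ⟨m, hm⟩ : ∃ m, x m ∉ Set.Ico (0:ℝ) (2*Real.pi) := by
        by_contra h
        push_neg at h
        exact hx fun m _ => h m
      exact (Finset.prod_eq_zero (Finset.mem_univ m) (Set.indicator_of_notMem hm _)).symm
  rw [hind]
  rw [MeasureTheory.volume_pi, MeasureTheory.integral_fintype_prod_eq_prod
    (f := fun m y => (Set.Ico (0:ℝ) (2*Real.pi)).indicator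
      (fun y => Complex.exp (Complex.I * (n m : ℂ) * (y : ℂ))) y)]
  have : ∀ m : Fin d, (∫ y : ℝ, (Set.Ico (0:ℝ) (2*Real.pi)).indicator
      (fun y => Complex.exp (Complex.I * (n m : ℂ) * (y : ℂ))) y)
      = if n m = 0 then (((2 * Real.pi : ℝ)) : ℂ) else 0 := by
    intro m
    rw [MeasureTheory.integral_indicator measurableSet_Ico]
    exact exp_I_int_integral (n m)
  rw [Finset.prod_congr rfl fun m _ => this m]
  rcases eq_or_ne n 0 with hn | hn
  · simp only [hn, Pi.zero_apply, if_pos rfl, Finset.prod_const, if_true]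
    push_cast
    simp
  · rw [if_neg hn]
    obtain ⟨m, hm⟩ := Function.ne_iff.mp hn
    exact Finset.prod_eq_zero (Finset.mem_univ m) (if_neg hm)

lemma int_abs_le_sq (n : ℤ) : |(n : ℝ)| ≤ (n : ℝ) ^ 2 := by
  rcases eq_or_ne n 0 with h | h
  · simp [h]
  · have h1 : (1:ℝ) ≤ |(n:ℝ)| := by
      rw [← Int.cast_abs]
      exact_mod_cast Int.one_le_abs h
    nlinarith [sq_abs ((n:ℝ)), abs_nonneg ((n:ℝ))]

lemma sq_le_sum_sq {d : ℕ} (k : Fin d → ℤ) (i : Fin d) :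
    ((k i : ℝ))^2 ≤ ∑ m, ((k m : ℝ))^2 :=
  Finset.single_le_sum (f := fun m => ((k m : ℝ))^2) (fun m _ => sq_nonneg _) (Finset.mem_univ i)

lemma abs_le_sum_sq {d : ℕ} (k : Fin d → ℤ) (i : Fin d) :
    |(k i : ℝ)| ≤ ∑ m, ((k m : ℝ))^2 :=
  (int_abs_le_sq (k i)).trans (sq_le_sum_sq k i)

lemma abs_mul_abs_le_sum_sq {d : ℕ} (k : Fin d → ℤ) (i j : Fin d) :
    |(k i : ℝ)| * |(k j : ℝ)| ≤ ∑ m, ((k m : ℝ))^2 := by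
  have hi := sq_le_sum_sq k i
  have hj := sq_le_sum_sq k j
  nlinarith [sq_nonneg (|(k i : ℝ)| - |(k j : ℝ)|), sq_abs ((k i : ℝ)), sq_abs ((k j : ℝ)),
    abs_nonneg ((k i : ℝ)), abs_nonneg ((k j : ℝ))]

lemma one_le_sum_sq {d : ℕ} (k : Fin d → ℤ) (hk : k ≠ 0) :
    (1:ℝ) ≤ ∑ m, ((k m : ℝ))^2 := by
  obtain ⟨m, hm⟩ := Function.ne_iff.mp hk
  have hm' : k m ≠ 0 := by simpa using hm
  have h1 : (1:ℝ) ≤ ((k m : ℝ))^2 := by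
    have : (1:ℤ) ≤ |k m| := Int.one_le_abs hm'
    have h2 : (1:ℝ) ≤ |(k m : ℝ)| := by rw [← Int.cast_abs]; exact_mod_cast this
    nlinarith [sq_abs ((k m : ℝ))]
  exact h1.trans (sq_le_sum_sq k m)

/-- negation equivalence on nonzero modes -/
def negS {d : ℕ} : {k : Fin d → ℤ // k ≠ 0} ≃ {k : Fin d → ℤ // k ≠ 0} where
  toFun k := ⟨-k.1, by simpa using k.2⟩
  invFun k := ⟨-k.1, by simpa using k.2⟩
  left_inv k := by simp
  right_inv k := by simp

noncomputable def modeK {d : ℕ} (Φ : (Fin d → ℤ) → ℂ) (ω β : (Fin d → ℤ) → ℝ) (ε s : ℝ)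
    (x : Fin d → ℝ) (j : Fin d) (k : {k : Fin d → ℤ // k ≠ 0}) : ℂ :=
  (-Complex.I * (k.1 j : ℂ)) * Φ k.1 * tosc (ω k.1) (ε ^ (-(β k.1))) s * phase k.1 x

lemma norm_modeK {d : ℕ} (Φ : (Fin d → ℤ) → ℂ) (ω β : (Fin d → ℤ) → ℝ) (ε s : ℝ)
    (x : Fin d → ℝ) (j : Fin d) (k : {k : Fin d → ℤ // k ≠ 0}) :
    ‖modeK Φ ω β ε s x j k‖ = |(k.1 j : ℝ)| * ‖Φ k.1‖ := by
  rw [modeK]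
  rw [norm_mul, norm_mul, norm_mul, norm_phase, norm_tosc]
  simp [map_mul]

noncomputable def amp {d : ℕ} (Φ : (Fin d → ℤ) → ℂ) (ω β : (Fin d → ℤ) → ℝ) (ε t : ℝ)
    (i j : Fin d) (p : {k : Fin d → ℤ // k ≠ 0} × {k : Fin d → ℤ // k ≠ 0}) : ℂ :=
  ((-Complex.I * (p.1.1 i : ℂ)) * Φ p.1.1 * tosc (ω p.1.1) (ε ^ (-(β p.1.1))) t) *
  ((-Complex.I * (p.2.1 j : ℂ)) * Φ p.2.1 * tosc (ω p.2.1) (ε ^ (-(β p.2.1))) t)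

lemma norm_amp {d : ℕ} (Φ : (Fin d → ℤ) → ℂ) (ω β : (Fin d → ℤ) → ℝ) (ε t : ℝ)
    (i j : Fin d) (p : {k : Fin d → ℤ // k ≠ 0} × {k : Fin d → ℤ // k ≠ 0}) :
    ‖amp Φ ω β ε t i j p‖
      = (|(p.1.1 i : ℝ)| * ‖Φ p.1.1‖) * (|(p.2.1 j : ℝ)| * ‖Φ p.2.1‖) := by
  rw [amp]
  rw [norm_mul, norm_mul, norm_mul, norm_mul, norm_mul, norm_tosc, norm_tosc]
  simp [map_mul]

noncomputable def ccf {d : ℕ} (ω β : (Fin d → ℤ) → ℝ) (ε : ℝ) (v : Fin d → ℝ)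
    (p : {k : Fin d → ℤ // k ≠ 0} × {k : Fin d → ℤ // k ≠ 0}) : ℝ :=
  (∑ m, (p.1.1 m : ℝ) * v m) + ω p.2.1 * (ε ^ (-(β p.2.1))) * ε ^ 2

lemma mode_mul {d : ℕ} (Φ : (Fin d → ℤ) → ℂ) (ω β : (Fin d → ℤ) → ℝ) (ε t σ : ℝ)
    (x v : Fin d → ℝ) (i j : Fin d)
    (p : {k : Fin d → ℤ // k ≠ 0} × {k : Fin d → ℤ // k ≠ 0}) :
    modeK Φ ω β ε t (x + σ • v) i p.1 * modeK Φ ω β ε (t - ε ^ 2 * σ) x j p.2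
      = amp Φ ω β ε t i j p * Complex.exp (Complex.I * ((ccf ω β ε v p : ℝ) : ℂ) * (σ : ℂ))
        * phase (p.1.1 + p.2.1) x := by
  rw [modeK, modeK, phase_add, tosc_sub, amp, ← phase_mul]
  rw [show Complex.exp (Complex.I * ((ccf ω β ε v p : ℝ) : ℂ) * (σ : ℂ))
      = Complex.exp (Complex.I * ((∑ m, (p.1.1 m : ℝ) * v m : ℝ) : ℂ) * (σ : ℂ))
        * Complex.exp (Complex.I * ((ω p.2.1 * (ε ^ (-(β p.2.1))) * ε ^ 2 : ℝ) : ℂ) * (σ : ℂ)) by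
    rw [← Complex.exp_add]
    congr 1
    rw [ccf]
    push_cast
    ring]
  ring

end Stmt7

set_option maxHeartbeats 2000000 in
/-- for the oscillating electric field
`E^ε(t,x) = Σ_{k≠0} (−ik) Φ_k e^{−i ω_k ε^{−β_k} t} e^{i k·x}` (with `Φ_{−k} = Φ_k^*`,
`ω_{−k} = −ω_k`, `β_{−k} = β_k ≥ 0` and `Σ_{k≠0} |k|² |Φ_k| < ∞`), the diffusion tensor
`𝔻^ε(t,v) = ⨍ dx ∫_0^{t/ε²} dσ E^ε(t, x + σv) ⊗ E^ε(t − ε²σ, x)` has entries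
`Σ_{k≠0} k_i k_j |Φ_k|² sin((ε^{2−β_k} ω_k − k·v) t/ε²)/(ε^{2−β_k} ω_k − k·v)`
(the ratio `sin(aT)/a` interpreted as `T` when `a = 0`), the series converging absolutely.
The `𝕋^d`-average `⨍ dx` is taken over the fundamental domain `[0,2π)^d`. -/
theorem stmt_7 (d : ℕ) (hd : 1 ≤ d)
    (Φ : (Fin d → ℤ) → ℂ) (ω β : (Fin d → ℤ) → ℝ)
    (hΦ : ∀ k : Fin d → ℤ, k ≠ 0 → Φ (-k) = (starRingEnd ℂ) (Φ k))
    (hω : ∀ k : Fin d → ℤ, k ≠ 0 → ω (-k) = -ω k)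
    (hβpos : ∀ k : Fin d → ℤ, k ≠ 0 → 0 ≤ β k)
    (hβ : ∀ k : Fin d → ℤ, k ≠ 0 → β (-k) = β k)
    (hsum : Summable fun k : {k : Fin d → ℤ // k ≠ 0} =>
      (∑ i, ((k.1 i : ℝ)) ^ 2) * ‖Φ k.1‖)
    (E : ℝ → ℝ → (Fin d → ℝ) → Fin d → ℂ)
    (hE : ∀ (ε s : ℝ) (x : Fin d → ℝ) (j : Fin d),
      E ε s x j = ∑' k : {k : Fin d → ℤ // k ≠ 0},
        (-Complex.I * (k.1 j : ℂ)) * Φ k.1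
          * Complex.exp (-(Complex.I * (ω k.1 : ℂ) * ((ε ^ (-(β k.1)) : ℝ) : ℂ) * (s : ℂ)))
          * Complex.exp (Complex.I * ∑ i, (k.1 i : ℂ) * (x i : ℂ))) :
    ∀ t : ℝ, 0 < t → ∀ ε : ℝ, 0 < ε → ∀ v : Fin d → ℝ, ∀ i j : Fin d,
    ∀ F : {k : Fin d → ℤ // k ≠ 0} → ℂ,
      (∀ k : {k : Fin d → ℤ // k ≠ 0},
        F k = (((k.1 i : ℝ) * (k.1 j : ℝ) * ‖Φ k.1‖ ^ 2 *
          (if (ε ^ ((2 : ℝ) - β k.1) : ℝ) * ω k.1 - (∑ m, (k.1 m : ℝ) * v m) = 0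
           then t / ε ^ 2
           else Real.sin
              (((ε ^ ((2 : ℝ) - β k.1) : ℝ) * ω k.1 - ∑ m, (k.1 m : ℝ) * v m) * (t / ε ^ 2))
            / ((ε ^ ((2 : ℝ) - β k.1) : ℝ) * ω k.1 - ∑ m, (k.1 m : ℝ) * v m)) : ℝ) : ℂ)) →
      Summable (fun k : {k : Fin d → ℤ // k ≠ 0} => ‖F k‖) ∧
      (((2 * Real.pi) ^ d)⁻¹ : ℝ) •
        (∫ x in torusBox d,
          ∫ σ in (0 : ℝ)..(t / ε ^ 2), E ε t (x + σ • v) i * E ε (t - ε ^ 2 * σ) x j)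
        = ∑' k : {k : Fin d → ℤ // k ≠ 0}, F k := by
  intro t ht ε hε v i j F hF
  classical
  set T : ℝ := t / ε ^ 2 with hTdef
  have hT0 : (0:ℝ) ≤ T := by positivity
  -- summability basics
  set b : {k : Fin d → ℤ // k ≠ 0} → ℝ :=
    fun k => (∑ m, ((k.1 m : ℝ))^2) * ‖Φ k.1‖ with hbdef
  have hb : Summable b := hsum
  have hbnn : ∀ k, 0 ≤ b k := fun k =>
    mul_nonneg (Finset.sum_nonneg fun m _ => sq_nonneg _) (norm_nonneg _)
  have hone : ∀ (j' : Fin d) (k : {k : Fin d → ℤ // k ≠ 0}),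
      |(k.1 j' : ℝ)| * ‖Φ k.1‖ ≤ b k := fun j' k =>
    mul_le_mul_of_nonneg_right (Stmt7.abs_le_sum_sq k.1 j') (norm_nonneg _)
  have habsΦ : ∀ k : {k : Fin d → ℤ // k ≠ 0}, ‖Φ k.1‖ ≤ b k := by
    intro k
    calc ‖Φ k.1‖ = 1 * ‖Φ k.1‖ := (one_mul _).symm
      _ ≤ (∑ m, ((k.1 m : ℝ))^2) * ‖Φ k.1‖ :=
          mul_le_mul_of_nonneg_right (Stmt7.one_le_sum_sq k.1 k.2) (norm_nonneg _)
  set M : ℝ := ∑' k, b k with hMdef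
  have hbM : ∀ k, b k ≤ M := fun k => Summable.le_tsum hb k fun _ _ => hbnn _
  -- the frequency for the diagonal terms
  set aK : {k : Fin d → ℤ // k ≠ 0} → ℝ :=
    fun k => (ε ^ ((2 : ℝ) - β k.1) : ℝ) * ω k.1 - (∑ m, (k.1 m : ℝ) * v m) with haKdef
  ---- Part 1 : absolute convergence of F
  have hRle : ∀ k, |if aK k = 0 then T
      else Real.sin (aK k * T) / aK k| ≤ T := by
    intro k
    split_ifs with h
    · rw [abs_of_nonneg hT0]
    · rw [abs_div]
      have hpos : 0 < |aK k| := abs_pos.mpr h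
      calc |Real.sin (aK k * T)| / |aK k| ≤ |aK k * T| / |aK k| :=
            (div_le_div_iff_of_pos_right hpos).mpr Real.abs_sin_le_abs
        _ = |aK k| * |T| / |aK k| := by rw [abs_mul]
        _ = |T| := by field_simp
        _ = T := abs_of_nonneg hT0
  have hFnorm : ∀ k, ‖F k‖ ≤ (M * T) * b k := by
    intro k
    rw [hF k, Complex.norm_real, Real.norm_eq_abs]
    rw [abs_mul, abs_mul, abs_mul]
    have h1 : |(k.1 i : ℝ)| * |(k.1 j : ℝ)| * |‖Φ k.1‖ ^ 2|
        ≤ (∑ m, ((k.1 m : ℝ))^2) * ‖Φ k.1‖ ^ 2 := by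
      rw [abs_of_nonneg (by positivity : (0:ℝ) ≤ ‖Φ k.1‖ ^ 2)]
      exact mul_le_mul_of_nonneg_right (Stmt7.abs_mul_abs_le_sum_sq k.1 i j) (by positivity)
    have h2 : (∑ m, ((k.1 m : ℝ))^2) * ‖Φ k.1‖ ^ 2 ≤ b k * M := by
      rw [sq]
      calc (∑ m, ((k.1 m : ℝ))^2) * (‖Φ k.1‖ * ‖Φ k.1‖)
          = b k * ‖Φ k.1‖ := by rw [hbdef]; ring
        _ ≤ b k * M := mul_le_mul_of_nonneg_left ((habsΦ k).trans (hbM k)) (hbnn k)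
    calc |(k.1 i : ℝ)| * |(k.1 j : ℝ)| * |‖Φ k.1‖ ^ 2| * |_|
        ≤ (b k * M) * T := by
          exact mul_le_mul (h1.trans h2) (hRle k) (abs_nonneg _)
            (mul_nonneg (hbnn k) ((hbnn k).trans (hbM k)))
      _ = (M * T) * b k := by ring
  have hFsummable : Summable fun k => ‖F k‖ :=
    Summable.of_nonneg_of_le (fun k => norm_nonneg _) hFnorm (hb.mul_left (M * T))
  refine ⟨hFsummable, ?_⟩
  ---- Part 2 : the integral identity
  have hE' : ∀ (s : ℝ) (x : Fin d → ℝ) (j' : Fin d),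
      E ε s x j' = ∑' k, Stmt7.modeK Φ ω β ε s x j' k := fun s x j' => hE ε s x j'
  have hmode_sum : ∀ (s : ℝ) (x : Fin d → ℝ) (j' : Fin d),
      Summable fun k => ‖Stmt7.modeK Φ ω β ε s x j' k‖ := by
    intro s x j'
    refine Summable.of_nonneg_of_le (fun k => norm_nonneg _) (fun k => ?_) hb
    rw [Stmt7.norm_modeK]
    exact hone j' k
  have hamp_nn : ∀ p, (0:ℝ) ≤ ‖Stmt7.amp Φ ω β ε t i j p‖ := fun p => norm_nonneg _
  have hbb : Summable fun p : {k : Fin d → ℤ // k ≠ 0} × {k : Fin d → ℤ // k ≠ 0} =>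
      b p.1 * b p.2 := hb.mul_of_nonneg hb hbnn hbnn
  have hamp_le : ∀ p : {k : Fin d → ℤ // k ≠ 0} × {k : Fin d → ℤ // k ≠ 0},
      ‖Stmt7.amp Φ ω β ε t i j p‖ ≤ b p.1 * b p.2 := by
    intro p
    rw [Stmt7.norm_amp]
    exact mul_le_mul (hone i p.1) (hone j p.2)
      (mul_nonneg (abs_nonneg _) (norm_nonneg _)) (hbnn p.1)
  have hamp_sum : Summable fun p : {k : Fin d → ℤ // k ≠ 0} × {k : Fin d → ℤ // k ≠ 0} =>
      ‖Stmt7.amp Φ ω β ε t i j p‖ :=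
    Summable.of_nonneg_of_le hamp_nn hamp_le hbb
  -- pointwise expansion of the product of fields
  have hinner : ∀ (σ : ℝ) (x : Fin d → ℝ),
      E ε t (x + σ • v) i * E ε (t - ε ^ 2 * σ) x j
        = ∑' p : {k : Fin d → ℤ // k ≠ 0} × {k : Fin d → ℤ // k ≠ 0},
            Stmt7.amp Φ ω β ε t i j p
            * Complex.exp (Complex.I * ((Stmt7.ccf ω β ε v p : ℝ) : ℂ) * (σ : ℂ))
            * Stmt7.phase (p.1.1 + p.2.1) x := by
    intro σ x
    rw [hE' t (x + σ • v) i, hE' (t - ε ^ 2 * σ) x j,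
      tsum_mul_tsum_of_summable_norm (hmode_sum t (x + σ • v) i) (hmode_sum (t - ε ^ 2 * σ) x j)]
    exact tsum_congr fun p => Stmt7.mode_mul Φ ω β ε t σ x v i j p
  -- swap the σ-integral with the sum
  have hJle : ∀ c : ℝ, ‖∫ σ in (0:ℝ)..T, Complex.exp (Complex.I * (c : ℂ) * (σ : ℂ))‖ ≤ T := by
    intro c
    have := intervalIntegral.norm_integral_le_of_norm_le_const (a := 0) (b := T) (C := 1)
      (f := fun σ : ℝ => Complex.exp (Complex.I * (c : ℂ) * (σ : ℂ)))
      (fun σ _ => le_of_eq (Stmt7.norm_cexp_I_mul c σ))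
    simpa [abs_of_nonneg hT0] using this
  have hswap1 : ∀ x : Fin d → ℝ,
      (∫ σ in (0:ℝ)..T, E ε t (x + σ • v) i * E ε (t - ε ^ 2 * σ) x j)
        = ∑' p : {k : Fin d → ℤ // k ≠ 0} × {k : Fin d → ℤ // k ≠ 0},
            Stmt7.amp Φ ω β ε t i j p
            * (∫ σ in (0:ℝ)..T, Complex.exp (Complex.I * ((Stmt7.ccf ω β ε v p : ℝ) : ℂ) * (σ : ℂ)))
            * Stmt7.phase (p.1.1 + p.2.1) x := by
    intro x
    simp only [hinner]
    rw [intervalIntegral.integral_of_le hT0]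
    have hInt : ∀ p : {k : Fin d → ℤ // k ≠ 0} × {k : Fin d → ℤ // k ≠ 0},
        Integrable (fun σ : ℝ => Stmt7.amp Φ ω β ε t i j p
          * Complex.exp (Complex.I * ((Stmt7.ccf ω β ε v p : ℝ) : ℂ) * (σ : ℂ))
          * Stmt7.phase (p.1.1 + p.2.1) x) (volume.restrict (Set.Ioc (0:ℝ) T)) := by
      intro p
      exact ((continuous_const.mul (Stmt7.continuous_cexp_I_mul _)).mul
        continuous_const).integrableOn_Ioc
    have hSum : Summable fun p : {k : Fin d → ℤ // k ≠ 0} × {k : Fin d → ℤ // k ≠ 0} =>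
        ∫ σ in Set.Ioc (0:ℝ) T, ‖Stmt7.amp Φ ω β ε t i j p
          * Complex.exp (Complex.I * ((Stmt7.ccf ω β ε v p : ℝ) : ℂ) * (σ : ℂ))
          * Stmt7.phase (p.1.1 + p.2.1) x‖ := by
      have heq : (fun p : {k : Fin d → ℤ // k ≠ 0} × {k : Fin d → ℤ // k ≠ 0} =>
          ∫ σ in Set.Ioc (0:ℝ) T, ‖Stmt7.amp Φ ω β ε t i j p
          * Complex.exp (Complex.I * ((Stmt7.ccf ω β ε v p : ℝ) : ℂ) * (σ : ℂ))
          * Stmt7.phase (p.1.1 + p.2.1) x‖)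
          = fun p => T * ‖Stmt7.amp Φ ω β ε t i j p‖ := by
        funext p
        simp only [norm_mul, Stmt7.norm_cexp_I_mul, Stmt7.norm_phase, mul_one]
        rw [MeasureTheory.setIntegral_const, measureReal_def, Real.volume_Ioc, sub_zero,
          ENNReal.toReal_ofReal hT0, smul_eq_mul]
      rw [heq]
      exact hamp_sum.mul_left T
    rw [← MeasureTheory.integral_tsum_of_summable_integral_norm hInt hSum]
    refine tsum_congr fun p => ?_
    rw [intervalIntegral.integral_of_le hT0, MeasureTheory.integral_mul_const,
      MeasureTheory.integral_const_mul]
  -- swap the x-integral with the sum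
  have hswap2 :
      (∫ x in torusBox d, ∫ σ in (0:ℝ)..T, E ε t (x + σ • v) i * E ε (t - ε ^ 2 * σ) x j)
        = ∑' p : {k : Fin d → ℤ // k ≠ 0} × {k : Fin d → ℤ // k ≠ 0},
            Stmt7.amp Φ ω β ε t i j p
            * (∫ σ in (0:ℝ)..T, Complex.exp (Complex.I * ((Stmt7.ccf ω β ε v p : ℝ) : ℂ) * (σ : ℂ)))
            * (∫ x in torusBox d, Stmt7.phase (p.1.1 + p.2.1) x) := by
    simp only [hswap1]
    have hInt2 : ∀ p : {k : Fin d → ℤ // k ≠ 0} × {k : Fin d → ℤ // k ≠ 0},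
        Integrable (fun x : Fin d → ℝ => Stmt7.amp Φ ω β ε t i j p
          * (∫ σ in (0:ℝ)..T, Complex.exp (Complex.I * ((Stmt7.ccf ω β ε v p : ℝ) : ℂ) * (σ : ℂ)))
          * Stmt7.phase (p.1.1 + p.2.1) x) (volume.restrict (torusBox d)) := by
      intro p
      refine Integrable.mono' (g := fun _ => ‖Stmt7.amp Φ ω β ε t i j p
          * (∫ σ in (0:ℝ)..T, Complex.exp (Complex.I * ((Stmt7.ccf ω β ε v p : ℝ) : ℂ) * (σ : ℂ)))‖)
        (integrableOn_const (Stmt7.volume_torusBox_lt_top d).ne)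
        ((continuous_const.mul (Stmt7.continuous_phase _)).aestronglyMeasurable) ?_
      filter_upwards with x
      rw [norm_mul, Stmt7.norm_phase, mul_one]
    have hSum2 : Summable fun p : {k : Fin d → ℤ // k ≠ 0} × {k : Fin d → ℤ // k ≠ 0} =>
        ∫ x in torusBox d, ‖Stmt7.amp Φ ω β ε t i j p
          * (∫ σ in (0:ℝ)..T, Complex.exp (Complex.I * ((Stmt7.ccf ω β ε v p : ℝ) : ℂ) * (σ : ℂ)))
          * Stmt7.phase (p.1.1 + p.2.1) x‖ := by
      have heq : (fun p : {k : Fin d → ℤ // k ≠ 0} × {k : Fin d → ℤ // k ≠ 0} =>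
          ∫ x in torusBox d, ‖Stmt7.amp Φ ω β ε t i j p
          * (∫ σ in (0:ℝ)..T, Complex.exp (Complex.I * ((Stmt7.ccf ω β ε v p : ℝ) : ℂ) * (σ : ℂ)))
          * Stmt7.phase (p.1.1 + p.2.1) x‖)
          = fun p => (2 * Real.pi) ^ d * (‖Stmt7.amp Φ ω β ε t i j p‖
              * ‖∫ σ in (0:ℝ)..T, Complex.exp (Complex.I * ((Stmt7.ccf ω β ε v p : ℝ) : ℂ) * (σ : ℂ))‖) := by
        funext p
        simp only [norm_mul, Stmt7.norm_phase, mul_one]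
        rw [MeasureTheory.setIntegral_const, measureReal_def, Stmt7.volume_torusBox_toReal, smul_eq_mul]
      rw [heq]
      refine Summable.of_nonneg_of_le
        (fun p => mul_nonneg (by positivity) (mul_nonneg (norm_nonneg _) (norm_nonneg _)))
        (fun p => ?_) (hamp_sum.mul_left ((2 * Real.pi) ^ d * T))
      have h1 : ‖Stmt7.amp Φ ω β ε t i j p‖
            * ‖∫ σ in (0:ℝ)..T, Complex.exp (Complex.I * ((Stmt7.ccf ω β ε v p : ℝ) : ℂ) * (σ : ℂ))‖
          ≤ ‖Stmt7.amp Φ ω β ε t i j p‖ * T :=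
        mul_le_mul_of_nonneg_left (hJle _) (norm_nonneg _)
      calc (2 * Real.pi) ^ d * (‖Stmt7.amp Φ ω β ε t i j p‖
            * ‖∫ σ in (0:ℝ)..T, Complex.exp (Complex.I * ((Stmt7.ccf ω β ε v p : ℝ) : ℂ) * (σ : ℂ))‖)
          ≤ (2 * Real.pi) ^ d * (‖Stmt7.amp Φ ω β ε t i j p‖ * T) :=
            mul_le_mul_of_nonneg_left h1 (by positivity)
        _ = (2 * Real.pi) ^ d * T * ‖Stmt7.amp Φ ω β ε t i j p‖ := by ring
    rw [← MeasureTheory.integral_tsum_of_summable_integral_norm hInt2 hSum2]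
    exact tsum_congr fun p => MeasureTheory.integral_const_mul _ _
  -- evaluate the x-integral : only the diagonal survives
  have hbox : ∀ p : {k : Fin d → ℤ // k ≠ 0} × {k : Fin d → ℤ // k ≠ 0},
      Stmt7.amp Φ ω β ε t i j p
        * (∫ σ in (0:ℝ)..T, Complex.exp (Complex.I * ((Stmt7.ccf ω β ε v p : ℝ) : ℂ) * (σ : ℂ)))
        * (∫ x in torusBox d, Stmt7.phase (p.1.1 + p.2.1) x)
      = Stmt7.amp Φ ω β ε t i j p
        * (∫ σ in (0:ℝ)..T, Complex.exp (Complex.I * ((Stmt7.ccf ω β ε v p : ℝ) : ℂ) * (σ : ℂ)))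
        * (if p.1.1 + p.2.1 = 0 then ((((2 * Real.pi) ^ d : ℝ)) : ℂ) else 0) := by
    intro p
    rw [Stmt7.box_integral_phase]
  have hdiag :
      (∑' p : {k : Fin d → ℤ // k ≠ 0} × {k : Fin d → ℤ // k ≠ 0},
          Stmt7.amp Φ ω β ε t i j p
          * (∫ σ in (0:ℝ)..T, Complex.exp (Complex.I * ((Stmt7.ccf ω β ε v p : ℝ) : ℂ) * (σ : ℂ)))
          * (if p.1.1 + p.2.1 = 0 then ((((2 * Real.pi) ^ d : ℝ)) : ℂ) else 0))
        = ∑' k : {k : Fin d → ℤ // k ≠ 0},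
            Stmt7.amp Φ ω β ε t i j (k, Stmt7.negS k)
            * (∫ σ in (0:ℝ)..T, Complex.exp (Complex.I * ((Stmt7.ccf ω β ε v (k, Stmt7.negS k) : ℝ) : ℂ) * (σ : ℂ)))
            * ((((2 * Real.pi) ^ d : ℝ)) : ℂ) := by
    have hzero : ∀ k : {k : Fin d → ℤ // k ≠ 0}, k.1 + (Stmt7.negS k).1 = 0 := by
      intro k
      show k.1 + -k.1 = 0
      simp
    refine tsum_eq_tsum_of_ne_zero_bij (i := fun k => (k.1, Stmt7.negS k.1)) ?_ ?_ ?_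
    · intro k₁ k₂ h
      exact Subtype.ext (congrArg Prod.fst h)
    · rintro p hp
      have hcond : p.1.1 + p.2.1 = 0 := by
        by_contra hc
        apply hp
        simp [if_neg hc]
      have hp2 : p.2 = Stmt7.negS p.1 := by
        apply Subtype.ext
        show p.2.1 = -p.1.1
        linear_combination hcond
      have hgp : Stmt7.amp Φ ω β ε t i j (p.1, Stmt7.negS p.1)
          * (∫ σ in (0:ℝ)..T, Complex.exp (Complex.I * ((Stmt7.ccf ω β ε v (p.1, Stmt7.negS p.1) : ℝ) : ℂ) * (σ : ℂ)))
          * ((((2 * Real.pi) ^ d : ℝ)) : ℂ) ≠ 0 := by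
        have hpe : (p.1, Stmt7.negS p.1) = p := by rw [← hp2]
        rw [hpe]
        have h3 := hp
        rw [Function.mem_support, if_pos hcond] at h3
        exact h3
      refine ⟨⟨p.1, hgp⟩, ?_⟩
      show (p.1, Stmt7.negS p.1) = p
      rw [← hp2]
    · rintro ⟨k, hk⟩
      simp only
      rw [if_pos (hzero k)]
  -- diagonal values
  have hnegS1 : ∀ k : {k : Fin d → ℤ // k ≠ 0}, (Stmt7.negS k).1 = -k.1 := fun k => rfl
  have hF' : ∀ k : {k : Fin d → ℤ // k ≠ 0},
      F k = (((k.1 i : ℝ) * (k.1 j : ℝ) * ‖Φ k.1‖ ^ 2 *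
        (if aK k = 0 then T else Real.sin (aK k * T) / aK k) : ℝ) : ℂ) := fun k => hF k
  have hampdiag : ∀ k : {k : Fin d → ℤ // k ≠ 0}, Stmt7.amp Φ ω β ε t i j (k, Stmt7.negS k)
      = ((k.1 i : ℝ) : ℂ) * ((k.1 j : ℝ) : ℂ) * ((‖Φ k.1‖ : ℝ) : ℂ) ^ 2 := by
    intro k
    have hΦc : Φ k.1 * (starRingEnd ℂ) (Φ k.1) = ((‖Φ k.1‖ : ℝ) : ℂ) ^ 2 := by
      rw [Complex.mul_conj, Complex.normSq_eq_norm_sq]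
      push_cast
      ring
    have htosc : Stmt7.tosc (ω k.1) (ε ^ (-(β k.1))) t
        * Stmt7.tosc (-(ω k.1)) (ε ^ (-(β k.1))) t = 1 := by
      rw [Stmt7.tosc, Stmt7.tosc, ← Complex.exp_add,
        show (-(Complex.I * ((ω k.1 : ℝ) : ℂ) * ((ε ^ (-(β k.1)) : ℝ) : ℂ) * (t : ℂ))
          + -(Complex.I * ((-(ω k.1) : ℝ) : ℂ) * ((ε ^ (-(β k.1)) : ℝ) : ℂ) * (t : ℂ))) = 0 by
          push_cast; ring,
        Complex.exp_zero]
    calc Stmt7.amp Φ ω β ε t i j (k, Stmt7.negS k)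
        = (Complex.I * Complex.I) * (-(((k.1 i : ℂ)) * ((k.1 j : ℂ))))
          * (Φ k.1 * (starRingEnd ℂ) (Φ k.1))
          * (Stmt7.tosc (ω k.1) (ε ^ (-(β k.1))) t
              * Stmt7.tosc (-(ω k.1)) (ε ^ (-(β k.1))) t) := by
          simp only [Stmt7.amp]
          simp only [hnegS1, Pi.neg_apply, Int.cast_neg, hΦ k.1 k.2, hω k.1 k.2, hβ k.1 k.2]
          ring
      _ = _ := by
          rw [Complex.I_mul_I, hΦc, htosc, mul_one]
          push_cast
          ring
  have hpow : ε ^ (-(β (-(1:Fin d → ℤ)))) = ε ^ (-(β (-(1:Fin d → ℤ)))) := rfl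
  have hccf_diag : ∀ k : {k : Fin d → ℤ // k ≠ 0},
      Stmt7.ccf ω β ε v (k, Stmt7.negS k) = -(aK k) := by
    intro k
    have hpow2 : ε ^ (-(β k.1)) * ε ^ 2 = ε ^ ((2:ℝ) - β k.1) := by
      have h2 : ε ^ ((2:ℝ)) = ε ^ (2:ℕ) := by
        rw [← Real.rpow_natCast ε 2]
        norm_num
      rw [show (2:ℝ) - β k.1 = -(β k.1) + 2 by ring, Real.rpow_add hε, h2]
    simp only [Stmt7.ccf]
    simp only [hnegS1, hω k.1 k.2, hβ k.1 k.2]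
    simp only [haKdef]
    rw [← hpow2]
    ring
  have hπc : (((2 * Real.pi) ^ d : ℝ) : ℂ) ≠ 0 :=
    Complex.ofReal_ne_zero.mpr (by positivity)
  have hterm : ∀ k : {k : Fin d → ℤ // k ≠ 0},
      ((((2 * Real.pi) ^ d)⁻¹ : ℝ) : ℂ) * (Stmt7.amp Φ ω β ε t i j (k, Stmt7.negS k)
        * (∫ σ in (0:ℝ)..T, Complex.exp (Complex.I * ((Stmt7.ccf ω β ε v (k, Stmt7.negS k) : ℝ) : ℂ) * (σ : ℂ)))
        * ((((2 * Real.pi) ^ d : ℝ)) : ℂ))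
      = (((k.1 i : ℝ) : ℂ) * ((k.1 j : ℝ) : ℂ) * ((‖Φ k.1‖ : ℝ) : ℂ) ^ 2)
          * (∫ σ in (0:ℝ)..T, Complex.exp (Complex.I * ((-(aK k) : ℝ) : ℂ) * (σ : ℂ))) := by
    intro k
    rw [hampdiag k]
    simp only [hccf_diag k]
    rw [Complex.ofReal_inv]
    field_simp
  -- bounds for the diagonal series
  have hAbound : ∀ k : {k : Fin d → ℤ // k ≠ 0},
      |(k.1 i : ℝ)| * |(k.1 j : ℝ)| * ‖Φ k.1‖ ^ 2 ≤ b k * M := by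
    intro k
    have h2 : (∑ m, ((k.1 m : ℝ))^2) * ‖Φ k.1‖ ^ 2 ≤ b k * M := by
      rw [sq]
      calc (∑ m, ((k.1 m : ℝ))^2) * (‖Φ k.1‖ * ‖Φ k.1‖)
          = b k * ‖Φ k.1‖ := by rw [hbdef]; ring
        _ ≤ b k * M := mul_le_mul_of_nonneg_left ((habsΦ k).trans (hbM k)) (hbnn k)
    exact le_trans (mul_le_mul_of_nonneg_right (Stmt7.abs_mul_abs_le_sum_sq k.1 i j)
      (by positivity)) h2
  have hBIGnorm : ∀ k : {k : Fin d → ℤ // k ≠ 0},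
      ‖(((k.1 i : ℝ) : ℂ) * ((k.1 j : ℝ) : ℂ) * ((‖Φ k.1‖ : ℝ) : ℂ) ^ 2)
          * (∫ σ in (0:ℝ)..T, Complex.exp (Complex.I * ((-(aK k) : ℝ) : ℂ) * (σ : ℂ)))‖ ≤ (M * T) * b k := by
    intro k
    rw [norm_mul]
    have hA : ‖((k.1 i : ℝ) : ℂ) * ((k.1 j : ℝ) : ℂ) * ((‖Φ k.1‖ : ℝ) : ℂ) ^ 2‖
        = |(k.1 i : ℝ)| * |(k.1 j : ℝ)| * ‖Φ k.1‖ ^ 2 := by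
      rw [norm_mul, norm_mul, norm_pow, Complex.norm_real, Complex.norm_real,
        Complex.norm_real, Real.norm_eq_abs, Real.norm_eq_abs, Real.norm_eq_abs,
        abs_of_nonneg (norm_nonneg _)]
    rw [hA]
    calc |(k.1 i : ℝ)| * |(k.1 j : ℝ)| * ‖Φ k.1‖ ^ 2
          * ‖∫ σ in (0:ℝ)..T, Complex.exp (Complex.I * ((-(aK k) : ℝ) : ℂ) * (σ : ℂ))‖
        ≤ (b k * M) * T := by
          exact mul_le_mul (hAbound k) (hJle _) (norm_nonneg _)
            (mul_nonneg (hbnn k) ((hbnn k).trans (hbM k)))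
      _ = (M * T) * b k := by ring
  have hBIGsummable : Summable (fun k : {k : Fin d → ℤ // k ≠ 0} =>
      (((k.1 i : ℝ) : ℂ) * ((k.1 j : ℝ) : ℂ) * ((‖Φ k.1‖ : ℝ) : ℂ) ^ 2)
          * (∫ σ in (0:ℝ)..T, Complex.exp (Complex.I * ((-(aK k) : ℝ) : ℂ) * (σ : ℂ)))) := by
    refine Summable.of_norm (Summable.of_nonneg_of_le (fun k => norm_nonneg _)
      hBIGnorm (hb.mul_left (M * T)))
  -- the pairing k ↔ -k
  have haKneg : ∀ k : {k : Fin d → ℤ // k ≠ 0}, aK (Stmt7.negS k) = -(aK k) := by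
    intro k
    simp only [haKdef]
    simp only [hnegS1, Pi.neg_apply, Int.cast_neg, hβ k.1 k.2, hω k.1 k.2, neg_mul,
      Finset.sum_neg_distrib]
    ring
  have habsneg : ∀ k : {k : Fin d → ℤ // k ≠ 0},
      ‖Φ ((Stmt7.negS k).1)‖ = ‖Φ k.1‖ := by
    intro k
    rw [hnegS1, hΦ k.1 k.2, Complex.norm_conj]
  have hBIGneg : ∀ k : {k : Fin d → ℤ // k ≠ 0},
      ((((Stmt7.negS k).1 i : ℝ) : ℂ) * (((Stmt7.negS k).1 j : ℝ) : ℂ)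
          * ((‖Φ (Stmt7.negS k).1‖ : ℝ) : ℂ) ^ 2)
        * (∫ σ in (0:ℝ)..T, Complex.exp (Complex.I * ((-(aK (Stmt7.negS k)) : ℝ) : ℂ) * (σ : ℂ)))
      = (((k.1 i : ℝ) : ℂ) * ((k.1 j : ℝ) : ℂ) * ((‖Φ k.1‖ : ℝ) : ℂ) ^ 2)
          * (∫ σ in (0:ℝ)..T, Complex.exp (Complex.I * ((aK k : ℝ) : ℂ) * (σ : ℂ))) := by
    intro k
    rw [haKneg k, neg_neg, habsneg k]
    simp only [hnegS1, Pi.neg_apply, Int.cast_neg, Complex.ofReal_neg]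
    ring
  have hexpf : ∀ c : ℝ, Complex.exp (Complex.I * (c : ℂ) * (T : ℂ))
      = ((Real.cos (c * T) : ℝ) : ℂ) + ((Real.sin (c * T) : ℝ) : ℂ) * Complex.I := by
    intro c
    rw [show Complex.I * (c : ℂ) * (T : ℂ) = ((c * T : ℝ) : ℂ) * Complex.I by push_cast; ring,
      Complex.exp_mul_I, ← Complex.ofReal_cos, ← Complex.ofReal_sin]
  have hpair : ∀ k : {k : Fin d → ℤ // k ≠ 0},
      ((((k.1 i : ℝ) : ℂ) * ((k.1 j : ℝ) : ℂ) * ((‖Φ k.1‖ : ℝ) : ℂ) ^ 2)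
          * (∫ σ in (0:ℝ)..T, Complex.exp (Complex.I * ((-(aK k) : ℝ) : ℂ) * (σ : ℂ)))) + ((((k.1 i : ℝ) : ℂ) * ((k.1 j : ℝ) : ℂ) * ((‖Φ k.1‖ : ℝ) : ℂ) ^ 2)
          * (∫ σ in (0:ℝ)..T, Complex.exp (Complex.I * ((aK k : ℝ) : ℂ) * (σ : ℂ)))) = 2 * F k := by
    intro k
    rw [hF' k, Stmt7.interval_exp, Stmt7.interval_exp]
    rcases eq_or_ne (aK k) 0 with h0 | h0
    · rw [h0]
      norm_num
      push_cast
      ring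
    · rw [if_neg h0, if_neg (show ¬(-(aK k) = 0) by simpa using h0), if_neg h0]
      rw [hexpf (-(aK k)), hexpf (aK k), show -(aK k) * T = -(aK k * T) by ring,
        Real.cos_neg, Real.sin_neg]
      have hca : ((aK k : ℝ) : ℂ) ≠ 0 := Complex.ofReal_ne_zero.mpr h0
      push_cast
      field_simp
      ring
  -- assemble everything
  have hchain : (∫ x in torusBox d,
        ∫ σ in (0:ℝ)..T, E ε t (x + σ • v) i * E ε (t - ε ^ 2 * σ) x j)
      = ∑' k : {k : Fin d → ℤ // k ≠ 0},
          Stmt7.amp Φ ω β ε t i j (k, Stmt7.negS k)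
          * (∫ σ in (0:ℝ)..T, Complex.exp (Complex.I * ((Stmt7.ccf ω β ε v (k, Stmt7.negS k) : ℝ) : ℂ) * (σ : ℂ)))
          * ((((2 * Real.pi) ^ d : ℝ)) : ℂ) := by
    rw [hswap2]
    exact (tsum_congr hbox).trans hdiag
  rw [hchain, Complex.real_smul, ← tsum_mul_left]
  refine (tsum_congr hterm).trans ?_
  have hsum2n : Summable (fun k : {k : Fin d → ℤ // k ≠ 0} =>
      ((((Stmt7.negS k).1 i : ℝ) : ℂ) * (((Stmt7.negS k).1 j : ℝ) : ℂ)
          * ((‖Φ (Stmt7.negS k).1‖ : ℝ) : ℂ) ^ 2)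
        * (∫ σ in (0:ℝ)..T, Complex.exp (Complex.I * ((-(aK (Stmt7.negS k)) : ℝ) : ℂ) * (σ : ℂ)))) :=
    Stmt7.negS.summable_iff.mpr hBIGsummable
  have hneg_tsum : (∑' k : {k : Fin d → ℤ // k ≠ 0},
      ((((Stmt7.negS k).1 i : ℝ) : ℂ) * (((Stmt7.negS k).1 j : ℝ) : ℂ)
          * ((‖Φ (Stmt7.negS k).1‖ : ℝ) : ℂ) ^ 2)
        * (∫ σ in (0:ℝ)..T, Complex.exp (Complex.I * ((-(aK (Stmt7.negS k)) : ℝ) : ℂ) * (σ : ℂ))))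
      = ∑' k : {k : Fin d → ℤ // k ≠ 0}, (((k.1 i : ℝ) : ℂ) * ((k.1 j : ℝ) : ℂ) * ((‖Φ k.1‖ : ℝ) : ℂ) ^ 2)
          * (∫ σ in (0:ℝ)..T, Complex.exp (Complex.I * ((-(aK k) : ℝ) : ℂ) * (σ : ℂ))) :=
    Stmt7.negS.tsum_eq (fun k : {k : Fin d → ℤ // k ≠ 0} => (((k.1 i : ℝ) : ℂ) * ((k.1 j : ℝ) : ℂ) * ((‖Φ k.1‖ : ℝ) : ℂ) ^ 2)
          * (∫ σ in (0:ℝ)..T, Complex.exp (Complex.I * ((-(aK k) : ℝ) : ℂ) * (σ : ℂ))))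
  have h2 : (2:ℂ) * (∑' k : {k : Fin d → ℤ // k ≠ 0}, (((k.1 i : ℝ) : ℂ) * ((k.1 j : ℝ) : ℂ) * ((‖Φ k.1‖ : ℝ) : ℂ) ^ 2)
          * (∫ σ in (0:ℝ)..T, Complex.exp (Complex.I * ((-(aK k) : ℝ) : ℂ) * (σ : ℂ))))
      = 2 * ∑' k, F k := by
    calc (2:ℂ) * (∑' k : {k : Fin d → ℤ // k ≠ 0}, (((k.1 i : ℝ) : ℂ) * ((k.1 j : ℝ) : ℂ) * ((‖Φ k.1‖ : ℝ) : ℂ) ^ 2)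
          * (∫ σ in (0:ℝ)..T, Complex.exp (Complex.I * ((-(aK k) : ℝ) : ℂ) * (σ : ℂ))))
        = (∑' k : {k : Fin d → ℤ // k ≠ 0}, (((k.1 i : ℝ) : ℂ) * ((k.1 j : ℝ) : ℂ) * ((‖Φ k.1‖ : ℝ) : ℂ) ^ 2)
          * (∫ σ in (0:ℝ)..T, Complex.exp (Complex.I * ((-(aK k) : ℝ) : ℂ) * (σ : ℂ))))
          + ∑' k : {k : Fin d → ℤ // k ≠ 0},
            ((((Stmt7.negS k).1 i : ℝ) : ℂ) * (((Stmt7.negS k).1 j : ℝ) : ℂ)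
                * ((‖Φ (Stmt7.negS k).1‖ : ℝ) : ℂ) ^ 2)
              * (∫ σ in (0:ℝ)..T, Complex.exp (Complex.I * ((-(aK (Stmt7.negS k)) : ℝ) : ℂ) * (σ : ℂ))) := by
          rw [hneg_tsum]; ring
      _ = ∑' k : {k : Fin d → ℤ // k ≠ 0}, (((((k.1 i : ℝ) : ℂ) * ((k.1 j : ℝ) : ℂ) * ((‖Φ k.1‖ : ℝ) : ℂ) ^ 2)
          * (∫ σ in (0:ℝ)..T, Complex.exp (Complex.I * ((-(aK k) : ℝ) : ℂ) * (σ : ℂ))))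
          + ((((Stmt7.negS k).1 i : ℝ) : ℂ) * (((Stmt7.negS k).1 j : ℝ) : ℂ)
                * ((‖Φ (Stmt7.negS k).1‖ : ℝ) : ℂ) ^ 2)
              * (∫ σ in (0:ℝ)..T, Complex.exp (Complex.I * ((-(aK (Stmt7.negS k)) : ℝ) : ℂ) * (σ : ℂ)))) :=
          (Summable.tsum_add hBIGsummable hsum2n).symm
      _ = ∑' k : {k : Fin d → ℤ // k ≠ 0}, 2 * F k := by
          refine tsum_congr fun k => ?_
          rw [hBIGneg k]
          exact hpair k
      _ = 2 * ∑' k, F k := tsum_mul_left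
  exact mul_left_cancel₀ two_ne_zero h2
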